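/- Let R be an algebra of type (𝒢, m, n) and suppose [k] = S ⊔ T is a partition of {1,…,k} into two disjoint subsets, each of which is a subgee. Then the product of the k+1 zero divisors V̄_S · (W_S⊗1 − 1⊗W_S) · V̄_T is nonzero in R ⊗̂ R; indeed, its expansion in the tensor-product basis contains the basis term W_∅ ⊗ V_T with nonzero coefficient, and this term cannot be cancelled. -/

import Mathlib

open scoped TensorProduct

/-- `[k] = {1,…,k}` as a finset of positive integers. -/
def bra (k : ℕ) : Finset ℕ+ := (Finset.range k).image (fun i => ⟨i + 1, i.succ_pos⟩)

/-- The domination order on finite multisets of positive integers: `MLE S T` holds iff there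
is a submultiset `T'` of `T` that can be matched up with `S` so that each element of `S` is
at most its partner in `T'`. -/
def MLE (S T : Multiset ℕ+) : Prop := ∃ T' ≤ T, Multiset.Rel (· ≤ ·) S T'

/-- `S` is a subgee of the collection `𝒢` of gees. -/
def Subgee (𝒢 : Finset (Finset ℕ+)) (S : Finset ℕ+) : Prop := ∃ G ∈ 𝒢, MLE S.val G.val

/-- `rho i T` is the number of elements of `T` greater than `i`. -/
def rho (i : ℕ+) (T : Finset ℕ+) : ℕ := (T.filter (fun t => i < t)).card

/-- The ordered monomial `V_S = V_{s₁} ⋯ V_{s_k}` for `S = {s₁ < ⋯ < s_k}`. -/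
def VSmon {R : Type} [Ring R] (V : ℕ+ → R) (S : Finset ℕ+) : R :=
  ((S.sort (· ≤ ·)).map V).prod

/-- An algebra of type `(𝒢, m, n)`. -/
structure IsPolygonAlgebra (n m : ℕ) (𝒢 : Finset (Finset ℕ+))
    (R : Type) [Ring R] [Algebra ℚ R] [FiniteDimensional ℚ R]
    (𝒜 : ℕ → Submodule ℚ R) [GradedAlgebra 𝒜]
    (V : ℕ+ → R) (W : Finset ℕ+ → R) : Prop where
  hn : 4 ≤ n
  hm : 1 ≤ m
  gee_nonempty : 𝒢.Nonempty
  gee_sub : ∀ G ∈ 𝒢, G ⊆ bra (n - 1)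
  gee_incomp : ∀ G ∈ 𝒢, ∀ G' ∈ 𝒢, MLE G.val G'.val → G = G'
  gee_card : ∀ G ∈ 𝒢, G.card ≤ m - 1
  gcomm : ∀ (i j : ℕ) (x y : R), x ∈ 𝒜 i → y ∈ 𝒜 j →
    x * y = ((-1 : ℚ)) ^ (i * j) • (y * x)
  V_mem : ∀ i : ℕ+, (i : ℕ) ≤ n - 1 → V i ∈ 𝒜 1
  W_mem : ∀ S : Finset ℕ+, Subgee 𝒢 S → W S ∈ 𝒜 (m - S.card)
  VS_ne : ∀ S : Finset ℕ+, S ⊆ bra (n - 1) → (VSmon V S ≠ 0 ↔ Subgee 𝒢 S)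
  basis_indep : LinearIndependent ℚ
    (Sum.elim (fun S : {S : Finset ℕ+ // Subgee 𝒢 S} => VSmon V S.1)
      (fun S : {S : Finset ℕ+ // Subgee 𝒢 S} => W S.1))
  basis_span : Submodule.span ℚ (Set.range
    (Sum.elim (fun S : {S : Finset ℕ+ // Subgee 𝒢 S} => VSmon V S.1)
      (fun S : {S : Finset ℕ+ // Subgee 𝒢 S} => W S.1))) = ⊤
  VW : ∀ S S' : Finset ℕ+, Subgee 𝒢 S → Subgee 𝒢 S' → S.card = S'.card →
    VSmon V S * W S' = if S = S' then W ∅ else 0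
  WW : ∀ S S' : Finset ℕ+, Subgee 𝒢 S → Subgee 𝒢 S' → S.card + S'.card = m →
    W S * W S' = 0

/-- `R` has no exotic products. -/
def NoExoticProducts (n : ℕ) (𝒢 : Finset (Finset ℕ+))
    {R : Type} [Ring R] [Algebra ℚ R] (V : ℕ+ → R) (W : Finset ℕ+ → R) : Prop :=
  (∀ S S' : Finset ℕ+, Subgee 𝒢 S → Subgee 𝒢 S' → W S * W S' = 0) ∧
  (∀ i : ℕ+, (i : ℕ) ≤ n - 1 → ∀ S : Finset ℕ+, Subgee 𝒢 S →
    (i ∈ S → V i * W S = ((-1 : ℚ)) ^ (rho i (S.erase i)) • W (S.erase i)) ∧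
    (i ∉ S → V i * W S = 0))

section Tensor

variable {R : Type} [Ring R] [Algebra ℚ R] (𝒜 : ℕ → Submodule ℚ R) [GradedAlgebra 𝒜]

/-- The multiplication map `μ : R ⊗̂ R → R`. -/
noncomputable def muMap : (𝒜 ᵍ⊗[ℚ] 𝒜) →ₗ[ℚ] R :=
  (LinearMap.mul' ℚ R).comp (GradedTensorProduct.of ℚ 𝒜 𝒜).symm.toLinearMap

/-- `x ⊗ y` as an element of the graded tensor product `R ⊗̂ R`. -/
noncomputable def tm (x y : R) : 𝒜 ᵍ⊗[ℚ] 𝒜 := GradedTensorProduct.of ℚ 𝒜 𝒜 (x ⊗ₜ y)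

/-- `ū = u ⊗ 1 - 1 ⊗ u`. -/
noncomputable def ubar (u : R) : 𝒜 ᵍ⊗[ℚ] 𝒜 := tm 𝒜 u 1 - tm 𝒜 1 u

/-- `V̄_D = ∏_{i ∈ D} V̄ᵢ` with factors in increasing order of `i`. -/
noncomputable def Vbar (V : ℕ+ → R) (D : Finset ℕ+) : 𝒜 ᵍ⊗[ℚ] 𝒜 :=
  ((D.sort (· ≤ ·)).map (fun i => ubar 𝒜 (V i))).prod

/-- The set of `k` such that some product of `k` zero divisors in `R ⊗̂ R` is nonzero;
`zcl R` is the greatest element of this set. -/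
def zclSet : Set ℕ :=
  {k : ℕ | ∃ L : List (𝒜 ᵍ⊗[ℚ] 𝒜), L.length = k ∧
    (∀ x ∈ L, muMap 𝒜 x = 0) ∧ L.prod ≠ 0}

end Tensor

-- ===== auxiliary lemmas =====
section AuxBasic

lemma mem_bra {i : ℕ+} {k : ℕ} : i ∈ bra k ↔ (i:ℕ) ≤ k := by
  constructor
  · intro hi
    replace hi := Finset.mem_image.mp hi
    simp only [Finset.mem_range] at hi
    obtain ⟨j, hj, rfl⟩ := hi
    simpa using hj
  · intro hi
    apply Finset.mem_image.mpr
    refine ⟨(i:ℕ) - 1, Finset.mem_range.mpr (by have := i.pos; omega), ?_⟩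
    apply Subtype.ext
    have := i.pos
    show (i:ℕ) - 1 + 1 = (i:ℕ)
    omega

lemma mle_mem {S T : Multiset ℕ+} (h : MLE S T) {a : ℕ+} (ha : a ∈ S) :
    ∃ b ∈ T, a ≤ b := by
  obtain ⟨T', hT', hrel⟩ := h
  have : ∃ b ∈ T', a ≤ b := by
    clear hT'
    induction hrel with
    | zero => simp at ha
    | @cons x y s t hxy hst ih =>
      rcases Multiset.mem_cons.mp ha with rfl | h'
      · exact ⟨y, Multiset.mem_cons_self _ _, hxy⟩
      · obtain ⟨b, hb, hab⟩ := ih h'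
        exact ⟨b, Multiset.mem_cons_of_mem hb, hab⟩
  obtain ⟨b, hb, hab⟩ := this
  exact ⟨b, Multiset.mem_of_le hT' hb, hab⟩

lemma subgee_empty {𝒢 : Finset (Finset ℕ+)} (hne : 𝒢.Nonempty) : Subgee 𝒢 ∅ := by
  obtain ⟨G, hG⟩ := hne
  exact ⟨G, hG, 0, Multiset.zero_le _, by simp [Multiset.rel_zero_left]⟩

end AuxBasic
section AuxV

variable {R : Type} [Ring R]

lemma VSmon_empty (V : ℕ+ → R) : VSmon V ∅ = 1 := by
  simp [VSmon]

lemma VSmon_singleton (V : ℕ+ → R) (i : ℕ+) : VSmon V {i} = V i := by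
  simp [VSmon]

lemma VSmon_insert (V : ℕ+ → R) {i : ℕ+} {U : Finset ℕ+}
    (hmin : ∀ u ∈ U, i < u) (hni : i ∉ U) :
    VSmon V (insert i U) = V i * VSmon V U := by
  unfold VSmon
  rw [Finset.sort_insert (r := (· ≤ ·)) (fun b hb => (hmin b hb).le) hni]
  simp

lemma VSmon_sorted_prod (V : ℕ+ → R) :
    ∀ l : List ℕ+, l.Pairwise (· < ·) → (l.map V).prod = VSmon V l.toFinset
  | [], _ => by simp [VSmon_empty]
  | (a :: l), hs => by
    have hs' := List.pairwise_cons.mp hs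
    rw [List.map_cons, List.prod_cons, VSmon_sorted_prod V l hs'.2, List.toFinset_cons]
    rw [VSmon_insert V (fun u hu => hs'.1 u (List.mem_toFinset.mp hu))
      (fun hma => lt_irrefl a (hs'.1 a (List.mem_toFinset.mp hma)))]

end AuxV

section AuxGraded

variable {n m : ℕ} {𝒢 : Finset (Finset ℕ+)}
variable {R : Type} [Ring R] [Algebra ℚ R] [FiniteDimensional ℚ R]
variable {𝒜 : ℕ → Submodule ℚ R} [GradedAlgebra 𝒜] {V : ℕ+ → R} {W : Finset ℕ+ → R}

lemma subgee_le {S : Finset ℕ+} (h : IsPolygonAlgebra n m 𝒢 R 𝒜 V W)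
    (hS : Subgee 𝒢 S) : ∀ x ∈ S, (x:ℕ) ≤ n - 1 := by
  intro x hx
  obtain ⟨G, hG, hmle⟩ := hS
  obtain ⟨b, hb, hxb⟩ := mle_mem hmle (by simpa using hx)
  have : b ∈ bra (n-1) := h.gee_sub G hG hb
  have := mem_bra.mp this
  calc (x:ℕ) ≤ (b:ℕ) := hxb
  _ ≤ n - 1 := this

lemma VL_mem (h : IsPolygonAlgebra n m 𝒢 R 𝒜 V W) :
    ∀ l : List ℕ+, (∀ x ∈ l, (x:ℕ) ≤ n - 1) → (l.map V).prod ∈ 𝒜 l.length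
  | [], _ => by simpa using SetLike.one_mem_graded 𝒜
  | (a :: l), hl => by
    have h1 : V a ∈ 𝒜 1 := h.V_mem a (hl a (by simp))
    have h2 := VL_mem h l (fun x hx => hl x (List.mem_cons_of_mem _ hx))
    have := SetLike.mul_mem_graded h1 h2
    rw [List.map_cons, List.prod_cons]
    simpa [Nat.add_comm] using this

lemma VSmon_mem (h : IsPolygonAlgebra n m 𝒢 R 𝒜 V W) {U : Finset ℕ+}
    (hU : ∀ x ∈ U, (x:ℕ) ≤ n - 1) : VSmon V U ∈ 𝒜 U.card := by
  have := VL_mem h (U.sort (· ≤ ·)) (fun x hx => hU x (Finset.mem_sort (α := ℕ+) (· ≤ ·) |>.mp hx))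
  simpa [VSmon, Finset.length_sort] using this

lemma Vsq (h : IsPolygonAlgebra n m 𝒢 R 𝒜 V W) {i : ℕ+} (hi : (i:ℕ) ≤ n - 1) :
    V i * V i = 0 := by
  have hg := h.gcomm 1 1 (V i) (V i) (h.V_mem i hi) (h.V_mem i hi)
  have hx : V i * V i = -(V i * V i) := by
    simpa using hg
  have h2 : V i * V i + V i * V i = 0 := by
    nth_rewrite 1 [hx]; abel
  calc V i * V i = (2:ℚ)⁻¹ • ((2:ℚ) • (V i * V i)) := by rw [smul_smul]; norm_num
  _ = 0 := by rw [two_smul, h2, smul_zero]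

lemma Vmul_list (h : IsPolygonAlgebra n m 𝒢 R 𝒜 V W) {i : ℕ+} (hi : (i:ℕ) ≤ n - 1) :
    ∀ l : List ℕ+, l.Pairwise (· < ·) → (∀ x ∈ l, (x:ℕ) ≤ n - 1) →
    ∃ c : ℚ, V i * (l.map V).prod = c • VSmon V (insert i l.toFinset)
  | [], _, _ => ⟨1, by simp [VSmon_singleton]⟩
  | (u :: l), hs, hle => by
    have hs' := List.pairwise_cons.mp hs
    rcases lt_trichotomy i u with hlt | heq | hgt
    · refine ⟨1, ?_⟩
      rw [VSmon_sorted_prod V (u :: l) hs, one_smul]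
      rw [VSmon_insert V ?hmin ?hni]
      case hmin =>
        intro x hx
        rcases List.mem_cons.mp (List.mem_toFinset.mp hx) with h1 | h2
        · exact h1 ▸ hlt
        · exact lt_trans hlt (hs'.1 _ h2)
      case hni =>
        intro hmem
        rcases List.mem_cons.mp (List.mem_toFinset.mp hmem) with h1 | h2
        · exact absurd h1 (ne_of_lt hlt)
        · exact absurd (hs'.1 _ h2) (not_lt.mpr hlt.le)
    · subst heq
      refine ⟨0, ?_⟩
      rw [List.map_cons, List.prod_cons, ← mul_assoc, Vsq h hi, zero_mul, zero_smul]
    · obtain ⟨c, hc⟩ := Vmul_list h hi l hs'.2 (fun x hx => hle x (List.mem_cons_of_mem _ hx))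
      have hcomm : V i * V u = -(V u * V i) := by
        simpa using h.gcomm 1 1 (V i) (V u) (h.V_mem i hi) (h.V_mem u (hle u (by simp)))
      refine ⟨-c, ?_⟩
      have hnu : u ∉ insert i l.toFinset := by
        intro hmem
        rcases Finset.mem_insert.mp hmem with h1 | h2
        · exact absurd h1 (ne_of_lt hgt)
        · exact absurd (hs'.1 _ (List.mem_toFinset.mp h2)) (lt_irrefl u)
      calc V i * ((u :: l).map V).prod = V i * (V u * (l.map V).prod) := by simp
      _ = (V i * V u) * (l.map V).prod := by rw [mul_assoc]
      _ = -(V u * (V i * (l.map V).prod)) := by rw [hcomm, neg_mul, mul_assoc]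
      _ = -(V u * (c • VSmon V (insert i l.toFinset))) := by rw [hc]
      _ = (-c) • (V u * VSmon V (insert i l.toFinset)) := by
        rw [mul_smul_comm, neg_smul]
      _ = (-c) • VSmon V (insert u (insert i l.toFinset)) := by
        rw [VSmon_insert V ?hmin hnu]
        case hmin =>
          intro x hx
          rcases Finset.mem_insert.mp hx with h1 | h2
          · exact h1 ▸ hgt
          · exact hs'.1 _ (List.mem_toFinset.mp h2)
      _ = (-c) • VSmon V (insert i (u :: l).toFinset) := by
        rw [List.toFinset_cons, Finset.insert_comm]

lemma Vmul_smon (h : IsPolygonAlgebra n m 𝒢 R 𝒜 V W) {i : ℕ+} (hi : (i:ℕ) ≤ n - 1)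
    {U : Finset ℕ+} (hU : ∀ x ∈ U, (x:ℕ) ≤ n - 1) :
    ∃ c : ℚ, V i * VSmon V U = c • VSmon V (insert i U) := by
  have := Vmul_list h hi (U.sort (· ≤ ·)) (Finset.sortedLT_sort U).pairwise
    (fun x hx => hU x (Finset.mem_sort (α := ℕ+) (· ≤ ·) |>.mp hx))
  simpa [VSmon, Finset.sort_toFinset] using this

end AuxGraded
section AuxTensor

open GradedTensorProduct

variable {R : Type} [Ring R] [Algebra ℚ R]
variable (𝒜 : ℕ → Submodule ℚ R) [GradedAlgebra 𝒜]

lemma tm_eq (x y : R) : tm 𝒜 x y = x ᵍ⊗ₜ[ℚ] y := rfl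

lemma tm_one_one : tm 𝒜 (1:R) (1:R) = 1 := by
  rw [tm_eq]
  rw [← GradedTensorProduct.of_one (R := ℚ) (𝒜 := 𝒜) (ℬ := 𝒜), Algebra.TensorProduct.one_def]

lemma tm_smul_left (c : ℚ) (x y : R) : tm 𝒜 (c • x) y = c • tm 𝒜 x y := by
  unfold tm
  rw [← TensorProduct.smul_tmul', map_smul]

lemma tm_smul_right (c : ℚ) (x y : R) : tm 𝒜 x (c • y) = c • tm 𝒜 x y := by
  unfold tm
  rw [TensorProduct.tmul_smul, map_smul]

lemma tm_mul_left (a x y : R) : tm 𝒜 a 1 * tm 𝒜 x y = tm 𝒜 (a * x) y := by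
  have h1 : tm 𝒜 x y = tm 𝒜 x 1 * tm 𝒜 1 y :=
    (tmul_one_mul_one_tmul 𝒜 𝒜 x y).symm
  have h2 : tm 𝒜 a 1 * tm 𝒜 x 1 = tm 𝒜 (a * x) 1 := by
    have := (includeLeftRingHom 𝒜 𝒜).map_mul a x
    exact this.symm
  rw [h1, ← mul_assoc, h2]
  exact tmul_one_mul_one_tmul 𝒜 𝒜 (a*x) y

lemma tm_mul_right (b y : R) : tm 𝒜 1 b * tm 𝒜 1 y = tm 𝒜 1 (b * y) := by
  have := map_mul (includeRight 𝒜 𝒜) b y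
  exact this.symm

lemma tm_mul_sign {j d : ℕ} {b x : R} (hb : b ∈ 𝒜 j) (hx : x ∈ 𝒜 d) (y : R) :
    ∃ s : ℚ, tm 𝒜 1 b * tm 𝒜 x y = s • tm 𝒜 x (b * y) := by
  refine ⟨((((-1 : ℤˣ) ^ (j * d) : ℤˣ) : ℤ) : ℚ), ?_⟩
  have key : tm 𝒜 1 b * tm 𝒜 x 1
      = ((((-1 : ℤˣ) ^ (j * d) : ℤˣ) : ℤ) : ℚ) • tm 𝒜 x b := by
    have := tmul_coe_mul_coe_tmul 𝒜 𝒜 (1:R) (⟨b, hb⟩ : 𝒜 j) (⟨x, hx⟩ : 𝒜 d) (1:R)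
    rw [Units.smul_def, ← Int.cast_smul_eq_zsmul ℚ] at this
    simpa [tm_eq] using this
  calc tm 𝒜 1 b * tm 𝒜 x y = tm 𝒜 1 b * (tm 𝒜 x 1 * tm 𝒜 1 y) := by
        rw [show tm 𝒜 x 1 * tm 𝒜 1 y = tm 𝒜 x y from tmul_one_mul_one_tmul 𝒜 𝒜 x y]
  _ = (tm 𝒜 1 b * tm 𝒜 x 1) * tm 𝒜 1 y := (mul_assoc _ _ _).symm
  _ = ((((-1 : ℤˣ) ^ (j * d) : ℤˣ) : ℤ) : ℚ) • (tm 𝒜 x b * tm 𝒜 1 y) := by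
        rw [key, smul_mul_assoc]
  _ = ((((-1 : ℤˣ) ^ (j * d) : ℤˣ) : ℤ) : ℚ) • tm 𝒜 x (b * y) := by
        have := tmul_coe_mul_one_tmul 𝒜 𝒜 x (⟨b, hb⟩ : 𝒜 j) y
        rw [show ((⟨b, hb⟩ : 𝒜 j) : R) = b from rfl] at this
        rw [tm_eq, tm_eq, tm_eq, this]

lemma ubar_mul (u : R) (z : 𝒜 ᵍ⊗[ℚ] 𝒜) :
    ubar 𝒜 u * z = tm 𝒜 u 1 * z - tm 𝒜 1 u * z := by
  rw [ubar, sub_mul]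

end AuxTensor
section MainDev

variable {n m : ℕ} {𝒢 : Finset (Finset ℕ+)}
variable {R : Type} [Ring R] [Algebra ℚ R] [FiniteDimensional ℚ R]
variable (𝒜 : ℕ → Submodule ℚ R) [GradedAlgebra 𝒜] (V : ℕ+ → R) (W : Finset ℕ+ → R)

/-- Generators for the garbage span during the `T`-stage. -/
def GenT (F : Finset ℕ+) : Set (𝒜 ᵍ⊗[ℚ] 𝒜) :=
  {z | ∃ U U' : Finset ℕ+, U ∪ U' ⊆ F ∧ U.Nonempty ∧ Disjoint U U' ∧
    z = tm 𝒜 (VSmon V U) (VSmon V U')}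

/-- Generators for the garbage span after the `W`-step. -/
def GenW (N : ℕ) (S T : Finset ℕ+) : Set (𝒜 ᵍ⊗[ℚ] 𝒜) :=
  {z | (∃ U U'' U' : Finset ℕ+, U ⊆ bra N ∧ U'' ⊆ bra N ∧ U' ⊆ bra N ∧ U' ≠ T ∧
          z = tm 𝒜 (VSmon V U * W S * VSmon V U'') (VSmon V U')) ∨
       (∃ (U : Finset ℕ+) (y : R), U ⊆ bra N ∧ z = tm 𝒜 (VSmon V U) y)}

variable {𝒜 V W}

lemma GenT_closure (h : IsPolygonAlgebra n m 𝒢 R 𝒜 V W) {j : ℕ+} (hj : (j:ℕ) ≤ n - 1)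
    {F : Finset ℕ+} (hjF : j ∉ F) (hF : ∀ x ∈ F, (x:ℕ) ≤ n - 1) {z : 𝒜 ᵍ⊗[ℚ] 𝒜}
    (hz : z ∈ Submodule.span ℚ (GenT 𝒜 V F)) :
    ubar 𝒜 (V j) * z ∈ Submodule.span ℚ (GenT 𝒜 V (insert j F)) := by
  induction hz using Submodule.span_induction with
  | mem z hzm =>
    obtain ⟨U, U', hsub, hne, hdisj, rfl⟩ := hzm
    have hUle : ∀ x ∈ U, (x:ℕ) ≤ n - 1 :=
      fun x hx => hF x (hsub (Finset.mem_union_left _ hx))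
    have hU'le : ∀ x ∈ U', (x:ℕ) ≤ n - 1 :=
      fun x hx => hF x (hsub (Finset.mem_union_right _ hx))
    have hjU' : j ∉ U' := fun hm => hjF (hsub (Finset.mem_union_right _ hm))
    have hjU : j ∉ U := fun hm => hjF (hsub (Finset.mem_union_left _ hm))
    obtain ⟨c, hc⟩ := Vmul_smon h hj hUle
    obtain ⟨c', hc'⟩ := Vmul_smon h hj hU'le
    obtain ⟨s, hs⟩ := tm_mul_sign 𝒜 (h.V_mem j hj) (VSmon_mem h hUle) (VSmon V U')
    rw [ubar_mul, tm_mul_left, hc, hs, hc', tm_smul_left, tm_smul_right]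
    refine sub_mem (Submodule.smul_mem _ _ ?_) (Submodule.smul_mem _ _ (Submodule.smul_mem _ _ ?_))
    · apply Submodule.subset_span
      refine ⟨insert j U, U', ?_, Finset.insert_nonempty _ _,
        Finset.disjoint_insert_left.mpr ⟨hjU', hdisj⟩, rfl⟩
      rw [Finset.insert_union]
      exact Finset.insert_subset_insert _ hsub
    · apply Submodule.subset_span
      refine ⟨U, insert j U', ?_, hne,
        Finset.disjoint_insert_right.mpr ⟨hjU, hdisj⟩, rfl⟩
      rw [Finset.union_insert]
      exact Finset.insert_subset_insert _ hsub
  | zero => rw [mul_zero]; exact zero_mem _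
  | add x y _ _ hx hy => rw [mul_add]; exact add_mem hx hy
  | smul c x _ hx => rw [mul_smul_comm]; exact Submodule.smul_mem _ _ hx

lemma Tclaim (h : IsPolygonAlgebra n m 𝒢 R 𝒜 V W) :
    ∀ l : List ℕ+, l.Pairwise (· < ·) → (∀ x ∈ l, (x:ℕ) ≤ n - 1) →
    (l.map (fun i => ubar 𝒜 (V i))).prod
      - ((-1:ℚ)) ^ l.length • tm 𝒜 1 (VSmon V l.toFinset)
      ∈ Submodule.span ℚ (GenT 𝒜 V l.toFinset)
  | [], _, _ => by
    simp only [List.map_nil, List.prod_nil, List.length_nil, pow_zero, one_smul,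
      List.toFinset_nil, VSmon_empty, tm_one_one, sub_self]
    exact zero_mem _
  | (j :: l), hs, hle => by
    have hs' := List.pairwise_cons.mp hs
    have hj : (j:ℕ) ≤ n - 1 := hle j (by simp)
    have hjl : j ∉ l.toFinset := fun hm => lt_irrefl j (hs'.1 _ (List.mem_toFinset.mp hm))
    have hlle : ∀ x ∈ l, (x:ℕ) ≤ n - 1 := fun x hx => hle x (List.mem_cons_of_mem _ hx)
    have hFle : ∀ x ∈ l.toFinset, (x:ℕ) ≤ n - 1 := fun x hx => hlle x (List.mem_toFinset.mp hx)
    have IH := Tclaim h l hs'.2 hlle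
    set P := (l.map (fun i => ubar 𝒜 (V i))).prod with hPdef
    set M := tm 𝒜 (1:R) (VSmon V l.toFinset) with hMdef
    have hVins : VSmon V (insert j l.toFinset) = V j * VSmon V l.toFinset :=
      VSmon_insert V (fun u hu => hs'.1 _ (List.mem_toFinset.mp hu)) hjl
    have e1 : ubar 𝒜 (V j) * ((-1:ℚ) ^ l.length • M)
        = (-1:ℚ) ^ l.length • tm 𝒜 (VSmon V {j}) (VSmon V l.toFinset)
          - (-1:ℚ) ^ l.length • tm 𝒜 1 (VSmon V (insert j l.toFinset)) := by
      rw [mul_smul_comm, hMdef, ubar_mul, tm_mul_left, tm_mul_right, mul_one,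
        ← hVins, VSmon_singleton, smul_sub]
    have e2 : ((j :: l).map (fun i => ubar 𝒜 (V i))).prod
          - ((-1:ℚ)) ^ (j :: l).length • tm 𝒜 1 (VSmon V (j :: l).toFinset)
        = (-1:ℚ) ^ l.length • tm 𝒜 (VSmon V {j}) (VSmon V l.toFinset)
          + ubar 𝒜 (V j) * (P - (-1:ℚ) ^ l.length • M) := by
      rw [List.map_cons, List.prod_cons, List.toFinset_cons, List.length_cons,
        mul_sub, e1, pow_succ, mul_neg_one, neg_smul, sub_neg_eq_add, ← hPdef]
      abel
    rw [e2]
    refine add_mem (Submodule.smul_mem _ _ (Submodule.subset_span ?_)) ?_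
    · refine ⟨{j}, l.toFinset, ?_, Finset.singleton_nonempty _,
        Finset.disjoint_singleton_left.mpr hjl, rfl⟩
      rw [List.toFinset_cons]
      intro x hx
      rcases Finset.mem_union.mp hx with h1 | h2
      · rw [Finset.mem_singleton.mp h1]; exact Finset.mem_insert_self _ _
      · exact Finset.mem_insert_of_mem h2
    · rw [List.toFinset_cons]
      exact GenT_closure h hj hjl hFle IH

end MainDev
section MainDev2

variable {n m : ℕ} {𝒢 : Finset (Finset ℕ+)}
variable {R : Type} [Ring R] [Algebra ℚ R] [FiniteDimensional ℚ R]
variable {𝒜 : ℕ → Submodule ℚ R} [GradedAlgebra 𝒜] {V : ℕ+ → R} {W : Finset ℕ+ → R}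

lemma bra_le {F : Finset ℕ+} {N : ℕ} (hF : F ⊆ bra N) : ∀ x ∈ F, (x:ℕ) ≤ N :=
  fun x hx => mem_bra.mp (hF hx)

lemma le_bra {F : Finset ℕ+} {N : ℕ} (hF : ∀ x ∈ F, (x:ℕ) ≤ N) : F ⊆ bra N :=
  fun x hx => mem_bra.mpr (hF x hx)

lemma GenW_closure (h : IsPolygonAlgebra n m 𝒢 R 𝒜 V W) {S T : Finset ℕ+}
    (hS : Subgee 𝒢 S) {i : ℕ+} (hi : (i:ℕ) ≤ n - 1) (hiT : i ∉ T) {z : 𝒜 ᵍ⊗[ℚ] 𝒜}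
    (hz : z ∈ Submodule.span ℚ (GenW 𝒜 V W (n-1) S T)) :
    ubar 𝒜 (V i) * z ∈ Submodule.span ℚ (GenW 𝒜 V W (n-1) S T) := by
  induction hz using Submodule.span_induction with
  | mem z hzm =>
    rcases hzm with ⟨U, U'', U', hU, hU'', hU', hU'T, rfl⟩ | ⟨U, y, hU, rfl⟩
    · obtain ⟨c, hc⟩ := Vmul_smon h hi (bra_le hU)
      obtain ⟨c', hc'⟩ := Vmul_smon h hi (bra_le hU')
      have hx : VSmon V U * W S * VSmon V U'' ∈ 𝒜 (U.card + (m - S.card) + U''.card) :=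
        SetLike.mul_mem_graded (SetLike.mul_mem_graded (VSmon_mem h (bra_le hU))
          (h.W_mem S hS)) (VSmon_mem h (bra_le hU''))
      obtain ⟨s, hs⟩ := tm_mul_sign 𝒜 (h.V_mem i hi) hx (VSmon V U')
      have e1 : V i * (VSmon V U * W S * VSmon V U'')
          = c • (VSmon V (insert i U) * W S * VSmon V U'') := by
        rw [← mul_assoc, ← mul_assoc, hc, smul_mul_assoc, smul_mul_assoc]
      rw [ubar_mul, tm_mul_left, e1, hs, hc', tm_smul_left, tm_smul_right]
      refine sub_mem (Submodule.smul_mem _ _ (Submodule.subset_span ?_))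
        (Submodule.smul_mem _ _ (Submodule.smul_mem _ _ (Submodule.subset_span ?_)))
      · exact Or.inl ⟨insert i U, U'', U',
          Finset.insert_subset (mem_bra.mpr hi) hU, hU'', hU', hU'T, rfl⟩
      · refine Or.inl ⟨U, U'', insert i U', hU, hU'',
          Finset.insert_subset (mem_bra.mpr hi) hU', ?_, rfl⟩
        exact fun he => hiT (he ▸ Finset.mem_insert_self i U')
    · obtain ⟨c, hc⟩ := Vmul_smon h hi (bra_le hU)
      obtain ⟨s, hs⟩ := tm_mul_sign 𝒜 (h.V_mem i hi) (VSmon_mem h (bra_le hU)) y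
      rw [ubar_mul, tm_mul_left, hc, hs, tm_smul_left]
      refine sub_mem (Submodule.smul_mem _ _ (Submodule.subset_span ?_))
        (Submodule.smul_mem _ _ (Submodule.subset_span ?_))
      · exact Or.inr ⟨insert i U, y, Finset.insert_subset (mem_bra.mpr hi) hU, rfl⟩
      · exact Or.inr ⟨U, V i * y, hU, rfl⟩
  | zero => rw [mul_zero]; exact zero_mem _
  | add x y _ _ hx hy => rw [mul_add]; exact add_mem hx hy
  | smul c x _ hx => rw [mul_smul_comm]; exact Submodule.smul_mem _ _ hx

lemma Wstep (h : IsPolygonAlgebra n m 𝒢 R 𝒜 V W) {S T : Finset ℕ+}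
    (hS : Subgee 𝒢 S) (hT : Subgee 𝒢 T) {z : 𝒜 ᵍ⊗[ℚ] 𝒜}
    (hz : z ∈ Submodule.span ℚ (GenT 𝒜 V T)) :
    ubar 𝒜 (W S) * z ∈ Submodule.span ℚ (GenW 𝒜 V W (n-1) S T) := by
  induction hz using Submodule.span_induction with
  | mem z hzm =>
    obtain ⟨U, U', hsub, hne, hdisj, rfl⟩ := hzm
    have hUle : ∀ x ∈ U, (x:ℕ) ≤ n - 1 := fun x hx =>
      subgee_le h hT x (hsub (Finset.mem_union_left _ hx))
    have hU'le : ∀ x ∈ U', (x:ℕ) ≤ n - 1 := fun x hx =>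
      subgee_le h hT x (hsub (Finset.mem_union_right _ hx))
    have hU'T : U' ≠ T := by
      obtain ⟨u, hu⟩ := hne
      intro he
      exact Finset.disjoint_left.mp hdisj hu
        (he ▸ hsub (Finset.mem_union_left _ hu))
    have hWc : W S * VSmon V U
        = ((-1:ℚ)) ^ ((m - S.card) * U.card) • (VSmon V U * W S) :=
      h.gcomm _ _ (W S) (VSmon V U) (h.W_mem S hS) (VSmon_mem h hUle)
    obtain ⟨s, hs⟩ := tm_mul_sign 𝒜 (h.W_mem S hS) (VSmon_mem h hUle) (VSmon V U')
    rw [ubar_mul, tm_mul_left, hWc, hs, tm_smul_left]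
    refine sub_mem (Submodule.smul_mem _ _ (Submodule.subset_span ?_))
      (Submodule.smul_mem _ _ (Submodule.subset_span ?_))
    · refine Or.inl ⟨U, ∅, U', le_bra hUle, by simp, le_bra hU'le, hU'T, ?_⟩
      rw [VSmon_empty, mul_one]
    · exact Or.inr ⟨U, W S * VSmon V U', le_bra hUle, rfl⟩
  | zero => rw [mul_zero]; exact zero_mem _
  | add x y _ _ hx hy => rw [mul_add]; exact add_mem hx hy
  | smul c x _ hx => rw [mul_smul_comm]; exact Submodule.smul_mem _ _ hx

lemma Sclaim (h : IsPolygonAlgebra n m 𝒢 R 𝒜 V W) {S T : Finset ℕ+}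
    (hS : Subgee 𝒢 S) (hT : Subgee 𝒢 T) :
    ∀ l : List ℕ+, l.Pairwise (· < ·) → (∀ x ∈ l, (x:ℕ) ≤ n - 1 ∧ x ∉ T) →
    (l.map (fun i => ubar 𝒜 (V i))).prod * (ubar 𝒜 (W S) * Vbar 𝒜 V T)
      - ((-1:ℚ)) ^ T.card • tm 𝒜 (VSmon V l.toFinset * W S) (VSmon V T)
      ∈ Submodule.span ℚ (GenW 𝒜 V W (n-1) S T)
  | [], _, _ => by
    have hTle : ∀ x ∈ T, (x:ℕ) ≤ n - 1 := subgee_le h hT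
    have hTsortle : ∀ x ∈ T.sort (· ≤ ·), (x:ℕ) ≤ n - 1 :=
      fun x hx => hTle x ((Finset.mem_sort (α := ℕ+) (· ≤ ·)).mp hx)
    have ht := Tclaim h (T.sort (· ≤ ·)) (Finset.sortedLT_sort T).pairwise hTsortle
    rw [Finset.sort_toFinset, Finset.length_sort] at ht
    set κ := Vbar 𝒜 V T - ((-1:ℚ)) ^ T.card • tm 𝒜 1 (VSmon V T) with hκ
    have hVbar : Vbar 𝒜 V T = ((-1:ℚ)) ^ T.card • tm 𝒜 1 (VSmon V T) + κ := by
      rw [hκ]; abel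
    have e1 : ubar 𝒜 (W S) * tm 𝒜 1 (VSmon V T)
        = tm 𝒜 (W S) (VSmon V T) - tm 𝒜 1 (W S * VSmon V T) := by
      rw [ubar_mul, tm_mul_left, tm_mul_right, mul_one]
    have e2 : (List.map (fun i => ubar 𝒜 (V i)) []).prod * (ubar 𝒜 (W S) * Vbar 𝒜 V T)
          - ((-1:ℚ)) ^ T.card • tm 𝒜 (VSmon V (List.toFinset []) * W S) (VSmon V T)
        = -(((-1:ℚ)) ^ T.card • tm 𝒜 1 (W S * VSmon V T)) + ubar 𝒜 (W S) * κ := by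
      rw [List.map_nil, List.prod_nil, one_mul, hVbar, mul_add, mul_smul_comm, e1,
        List.toFinset_nil, VSmon_empty, one_mul, smul_sub]
      abel
    rw [e2]
    refine add_mem (neg_mem (Submodule.smul_mem _ _ (Submodule.subset_span ?_))) ?_
    · exact Or.inr ⟨∅, W S * VSmon V T, by simp, by rw [VSmon_empty]⟩
    · exact Wstep h hS hT ht
  | (i :: l), hs, hle => by
    have hs' := List.pairwise_cons.mp hs
    have hi : (i:ℕ) ≤ n - 1 := (hle i (by simp)).1
    have hiT : i ∉ T := (hle i (by simp)).2
    have hil : i ∉ l.toFinset := fun hm => lt_irrefl i (hs'.1 _ (List.mem_toFinset.mp hm))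
    have hlle : ∀ x ∈ l, (x:ℕ) ≤ n - 1 ∧ x ∉ T := fun x hx => hle x (List.mem_cons_of_mem _ hx)
    have hFle : ∀ x ∈ l.toFinset, (x:ℕ) ≤ n - 1 :=
      fun x hx => (hlle x (List.mem_toFinset.mp hx)).1
    have hTle : ∀ x ∈ T, (x:ℕ) ≤ n - 1 := subgee_le h hT
    have IH := Sclaim h hS hT l hs'.2 hlle
    set Q := ubar 𝒜 (W S) * Vbar 𝒜 V T with hQ
    set P := (l.map (fun i => ubar 𝒜 (V i))).prod with hPdef
    set M := tm 𝒜 (VSmon V l.toFinset * W S) (VSmon V T) with hMdef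
    have hVins : VSmon V (insert i l.toFinset) = V i * VSmon V l.toFinset :=
      VSmon_insert V (fun u hu => hs'.1 _ (List.mem_toFinset.mp hu)) hil
    have hx : VSmon V l.toFinset * W S ∈ 𝒜 (l.toFinset.card + (m - S.card)) :=
      SetLike.mul_mem_graded (VSmon_mem h hFle) (h.W_mem S hS)
    obtain ⟨s, hs2⟩ := tm_mul_sign 𝒜 (h.V_mem i hi) hx (VSmon V T)
    obtain ⟨c', hc'⟩ := Vmul_smon h hi hTle
    have e1 : ubar 𝒜 (V i) * M
        = tm 𝒜 (VSmon V (insert i l.toFinset) * W S) (VSmon V T)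
          - (s * c') • tm 𝒜 (VSmon V l.toFinset * W S) (VSmon V (insert i T)) := by
      rw [hMdef, ubar_mul, tm_mul_left, ← mul_assoc, ← hVins, hs2, hc', tm_smul_right,
        smul_smul]
    have e2 : ((i :: l).map (fun j => ubar 𝒜 (V j))).prod * Q
          - ((-1:ℚ)) ^ T.card • tm 𝒜 (VSmon V (i :: l).toFinset * W S) (VSmon V T)
        = -(((-1:ℚ)) ^ T.card • ((s * c') •
            tm 𝒜 (VSmon V l.toFinset * W S) (VSmon V (insert i T))))
          + ubar 𝒜 (V i) * (P * Q - ((-1:ℚ)) ^ T.card • M) := by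
      rw [List.map_cons, List.prod_cons, List.toFinset_cons, mul_assoc, mul_sub,
        mul_smul_comm, e1, ← hPdef, smul_sub]
      abel
    rw [e2]
    refine add_mem (neg_mem (Submodule.smul_mem _ _ (Submodule.smul_mem _ _
      (Submodule.subset_span ?_)))) (GenW_closure h hS hi hiT IH)
    refine Or.inl ⟨l.toFinset, ∅, insert i T, le_bra hFle, by simp,
      Finset.insert_subset (mem_bra.mpr hi) (le_bra hTle), ?_, ?_⟩
    · exact fun he => hiT (he ▸ Finset.mem_insert_self i T)
    · rw [VSmon_empty, mul_one]

end MainDev2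
/-- If `[k] = S ⊔ T` with both `S` and `T` subgees, then the product of the `k + 1`
zero divisors `V̄_S · (W_S ⊗ 1 − 1 ⊗ W_S) · V̄_T` is nonzero in `R ⊗̂ R`. -/
theorem stmt_10 (n m : ℕ) (𝒢 : Finset (Finset ℕ+))
    (R : Type) [Ring R] [Algebra ℚ R] [FiniteDimensional ℚ R]
    (𝒜 : ℕ → Submodule ℚ R) [GradedAlgebra 𝒜] (V : ℕ+ → R) (W : Finset ℕ+ → R)
    (h : IsPolygonAlgebra n m 𝒢 R 𝒜 V W)
    (k : ℕ) (S T : Finset ℕ+) (hdisj : Disjoint S T) (hunion : S ∪ T = bra k)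
    (hS : Subgee 𝒢 S) (hT : Subgee 𝒢 T) :
    Vbar 𝒜 V S * ubar 𝒜 (W S) * Vbar 𝒜 V T ≠ 0 := by
  classical
  have key := Sclaim h hS hT (S.sort (· ≤ ·)) (Finset.sortedLT_sort S).pairwise (fun x hx => by
    have hxS : x ∈ S := (Finset.mem_sort (α := ℕ+) (· ≤ ·)).mp hx
    exact ⟨subgee_le h hS x hxS, fun hxT => Finset.disjoint_left.mp hdisj hxS hxT⟩)
  rw [Finset.sort_toFinset] at key
  have hVW : VSmon V S * W S = W ∅ := by
    have := h.VW S S hS hS rfl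
    rwa [if_pos rfl] at this
  rw [hVW] at key
  -- the coordinate functionals
  let bas : Module.Basis ({X : Finset ℕ+ // Subgee 𝒢 X} ⊕ {X : Finset ℕ+ // Subgee 𝒢 X}) ℚ R :=
    Module.Basis.mk h.basis_indep (by rw [h.basis_span])
  let f : R →ₗ[ℚ] ℚ := bas.coord (Sum.inr ⟨∅, subgee_empty h.gee_nonempty⟩)
  let g : R →ₗ[ℚ] ℚ := bas.coord (Sum.inl ⟨T, hT⟩)
  let Φ : (𝒜 ᵍ⊗[ℚ] 𝒜) →ₗ[ℚ] ℚ :=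
    (TensorProduct.lid ℚ ℚ).toLinearMap ∘ₗ (TensorProduct.map f g) ∘ₗ
      (GradedTensorProduct.of ℚ 𝒜 𝒜).symm.toLinearMap
  have hΦ : ∀ x y : R, Φ (tm 𝒜 x y) = f x * g y := by
    intro x y
    show (TensorProduct.lid ℚ ℚ) (TensorProduct.map f g ((GradedTensorProduct.of ℚ 𝒜 𝒜).symm
      (GradedTensorProduct.of ℚ 𝒜 𝒜 (x ⊗ₜ y)))) = _
    rw [LinearEquiv.symm_apply_apply, TensorProduct.map_tmul, TensorProduct.lid_tmul, smul_eq_mul]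
  have hf0 : ∀ U : Finset ℕ+, U ⊆ bra (n-1) → f (VSmon V U) = 0 := by
    intro U hb
    by_cases hsg : Subgee 𝒢 U
    · have hbas : VSmon V U = bas (Sum.inl ⟨U, hsg⟩) := by
        rw [Module.Basis.mk_apply]; rfl
      rw [hbas]
      show bas.repr (bas (Sum.inl ⟨U, hsg⟩)) _ = 0
      rw [Module.Basis.repr_self, Finsupp.single_apply, if_neg (by simp)]
    · have hz : VSmon V U = 0 := by
        by_contra hnz
        exact hsg ((h.VS_ne U hb).mp hnz)
      rw [hz, map_zero]
  have hg0 : ∀ U' : Finset ℕ+, U' ⊆ bra (n-1) → U' ≠ T → g (VSmon V U') = 0 := by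
    intro U' hb hne
    by_cases hsg : Subgee 𝒢 U'
    · have hbas : VSmon V U' = bas (Sum.inl ⟨U', hsg⟩) := by
        rw [Module.Basis.mk_apply]; rfl
      rw [hbas]
      show bas.repr (bas (Sum.inl ⟨U', hsg⟩)) _ = 0
      rw [Module.Basis.repr_self, Finsupp.single_apply, if_neg (by simp [hne])]
    · have hz : VSmon V U' = 0 := by
        by_contra hnz
        exact hsg ((h.VS_ne U' hb).mp hnz)
      rw [hz, map_zero]
  have hΦK : ∀ z ∈ Submodule.span ℚ (GenW 𝒜 V W (n-1) S T), Φ z = 0 := by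
    intro z hz
    induction hz using Submodule.span_induction with
    | mem z hzm =>
      rcases hzm with ⟨U, U'', U', hU, hU'', hU', hU'T, rfl⟩ | ⟨U, y, hU, rfl⟩
      · rw [hΦ, hg0 U' hU' hU'T, mul_zero]
      · rw [hΦ, hf0 U hU, zero_mul]
    | zero => exact map_zero _
    | add x y _ _ hx hy => rw [map_add, hx, hy, add_zero]
    | smul c x _ hx => rw [map_smul, hx, smul_zero]
  have hfW : f (W ∅) = 1 := by
    have hbas : W ∅ = bas (Sum.inr ⟨∅, subgee_empty h.gee_nonempty⟩) := by
      rw [Module.Basis.mk_apply]; rfl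
    rw [hbas]
    show bas.repr (bas _) _ = 1
    rw [Module.Basis.repr_self, Finsupp.single_apply, if_pos rfl]
  have hgT : g (VSmon V T) = 1 := by
    have hbas : VSmon V T = bas (Sum.inl ⟨T, hT⟩) := by
      rw [Module.Basis.mk_apply]; rfl
    rw [hbas]
    show bas.repr (bas _) _ = 1
    rw [Module.Basis.repr_self, Finsupp.single_apply, if_pos rfl]
  intro h0
  rw [mul_assoc] at h0
  have hv : (List.map (fun i => ubar 𝒜 (V i)) (Finset.sort S (fun x1 x2 => x1 ≤ x2))).prod
      = Vbar 𝒜 V S := rfl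
  rw [hv, h0, zero_sub] at key
  have hΦval := hΦK _ key
  rw [map_neg, map_smul, hΦ, hfW, hgT, mul_one, smul_eq_mul, mul_one, neg_eq_zero] at hΦval
  exact pow_ne_zero T.card (by norm_num : (-1:ℚ) ≠ 0) hΦval
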